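/- Let g_0,…,g_{n-1} be Boolean functions on m variables, I ⊆ {0,…,m-1}, and V_0,…,V_{n-1} : 𝔽₂^I → ℤ ∪ {-∞} with vdeg_I(g_i) ≼ V_i for all i. Then for every u ∈ 𝔽₂ⁿ and w ∈ 𝔽₂^I, the vector degree of the product g^u := ∏_{i : u_i = 1} g_i satisfies vdeg_I(g^u)(w) ≤ max over all tuples (w_0,…,w_{n-1}) ∈ (𝔽₂^I)ⁿ with w_i = 0 whenever u_i = 0 and w = ⋁_{i : u_i = 1} w_i (coordinatewise OR) of the sum Σ_{i : u_i = 1} V_i(w_i), where the empty sum is 0 and the maximum of the empty set is -∞. -/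

import Mathlib

open Finset

section Core

variable {α : Type*}

/-- The monomial `x^u` over `𝔽₂`. -/
def monom [Fintype α] (u x : α → ZMod 2) : ZMod 2 :=
  ∏ i, if u i = 1 then x i else 1

/-- The ANF coefficient of the monomial `x^u` in `f`, via Möbius inversion. -/
def anf [Fintype α] [DecidableEq α] (f : (α → ZMod 2) → ZMod 2) (u : α → ZMod 2) : ZMod 2 :=
  ∑ v ∈ Finset.univ.filter (fun v : α → ZMod 2 => ∀ i, v i = 1 → u i = 1), f v

/-- Hamming weight. -/
def wt [Fintype α] (u : α → ZMod 2) : ℕ :=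
  (Finset.univ.filter (fun i => u i = 1)).card

/-- Algebraic degree, in `ℤ ∪ {-∞}`. -/
def deg [Fintype α] [DecidableEq α] (f : (α → ZMod 2) → ZMod 2) : WithBot ℤ :=
  (Finset.univ.filter (fun u : α → ZMod 2 => anf f u = 1)).sup
    (fun u => ((wt u : ℤ) : WithBot ℤ))

/-- Combine an assignment on `I` with one on `Iᶜ` to a full assignment. -/
def combine [Fintype α] [DecidableEq α] (I : Finset α) (w : ↥I → ZMod 2)
    (y : ↥Iᶜ → ZMod 2) : α → ZMod 2 :=
  fun i => if h : i ∈ I then w ⟨i, h⟩ else y ⟨i, Finset.mem_compl.mpr h⟩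

/-- The coefficient function `g_{f,w}` of `x_I^w` in `f`, a Boolean function of `x_{Iᶜ}`. -/
def coeffFun [Fintype α] [DecidableEq α] (f : (α → ZMod 2) → ZMod 2) (I : Finset α)
    (w : ↥I → ZMod 2) : (↥Iᶜ → ZMod 2) → ZMod 2 :=
  fun y => ∑ t : ↥Iᶜ → ZMod 2, anf f (combine I w t) * monom t y

/-- The vector degree of `f` w.r.t. the index set `I`. -/
def vdeg [Fintype α] [DecidableEq α] (f : (α → ZMod 2) → ZMod 2) (I : Finset α)
    (w : ↥I → ZMod 2) : WithBot ℤ :=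
  deg (coeffFun f I w)

/-- `f` with the variables outside `S` set to `0`. -/
def restrict0 [Fintype α] [DecidableEq α] (f : (α → ZMod 2) → ZMod 2) (S : Finset α) :
    (α → ZMod 2) → ZMod 2 :=
  fun x => f (fun i => if i ∈ S then x i else 0)

/-- Combine an assignment on `I₁` with one on `I₂ \ I₁` to an assignment on `I₂`. -/
def joinFn [DecidableEq α] {I₁ I₂ : Finset α} (w : ↥I₁ → ZMod 2)
    (w' : ↥(I₂ \ I₁) → ZMod 2) : ↥I₂ → ZMod 2 :=
  fun j => if h : (j : α) ∈ I₁ then w ⟨(j : α), h⟩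
           else w' ⟨(j : α), Finset.mem_sdiff.mpr ⟨j.2, h⟩⟩

end Core

/-- Coordinatewise OR of the family `W i`, over indices `i` with `u i = 1`. -/
def orFam {n : ℕ} {β : Type*} (u : Fin n → ZMod 2) (W : Fin n → β → ZMod 2) :
    β → ZMod 2 :=
  fun j => if ∃ i, u i = 1 ∧ W i j = 1 then 1 else 0

/-- The vector numeric mapping `VDEG_d(f, V)`. -/
def VDEG {n : ℕ} {δ : Type*} [Fintype δ] [DecidableEq δ]
    (f : (Fin n → ZMod 2) → ZMod 2) (V : Fin n → (δ → ZMod 2) → WithBot ℤ)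
    (w : δ → ZMod 2) : WithBot ℤ :=
  (Finset.univ.filter (fun p : (Fin n → ZMod 2) × (Fin n → δ → ZMod 2) =>
      anf f p.1 = 1 ∧ (∀ i, p.1 i = 0 → p.2 i = 0) ∧ w = orFam p.1 p.2)).sup
    (fun p => ∑ i ∈ Finset.univ.filter (fun i => p.1 i = 1), V i (p.2 i))

/-- Monomial transition `π_u(x) → π_v(g(x))`. -/
def MonTrans {a b : ℕ} (g : (Fin a → ZMod 2) → (Fin b → ZMod 2))
    (u : Fin a → ZMod 2) (v : Fin b → ZMod 2) : Prop :=
  anf (fun x => monom v (g x)) u = 1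

/-- Monomial trails from level `a` to level `b`, with fixed endpoints `u`, `v`
(trails are normalized to be `0` outside the levels `a, …, b`). -/
def Trails (n : ℕ → ℕ) (f : ∀ i, (Fin (n i) → ZMod 2) → (Fin (n (i + 1)) → ZMod 2))
    (a b : ℕ) (u : Fin (n a) → ZMod 2) (v : Fin (n b) → ZMod 2) :
    Set (∀ i, Fin (n i) → ZMod 2) :=
  {t | t a = u ∧ t b = v ∧ (∀ i, a ≤ i → i < b → MonTrans (f i) (t i) (t (i + 1))) ∧
       (∀ i, i < a → t i = fun _ => 0) ∧ (∀ i, b < i → t i = fun _ => 0)}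

/-- The iterated composition `f_{b-1} ∘ ⋯ ∘ f_a` (meaningful for `a ≤ b`). -/
def iterComp (n : ℕ → ℕ) (f : ∀ i, (Fin (n i) → ZMod 2) → (Fin (n (i + 1)) → ZMod 2))
    (a : ℕ) : (b : ℕ) → (Fin (n a) → ZMod 2) → (Fin (n b) → ZMod 2)
  | 0 => fun x j => if h : a = 0 then x (Fin.cast (show n 0 = n a by rw [h]) j) else 0
  | b + 1 =>
      if h : a = b + 1 then fun x j => x (Fin.cast (show n (b + 1) = n a by rw [h]) j)
      else fun x => f b (iterComp n f a b x)

section Iterated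

/-- Embed an index set `J ⊆ {0,…,n-1}` into the joint index set of size `n' 0 = n + m`. -/
def liftJ {n m N0 : ℕ} (h0 : N0 = n + m) (J : Finset (Fin n)) : Finset (Fin N0) :=
  J.image (fun (j : Fin n) => (⟨j.val, by have := j.isLt; omega⟩ : Fin N0))

/-- Set the `x`-variables outside `S` to zero in a joint assignment. -/
def mask0 {n m N0 : ℕ} (h0 : N0 = n + m) (S : Finset (Fin n)) (z : Fin N0 → ZMod 2) :
    Fin N0 → ZMod 2 :=
  fun i => if h : (i : ℕ) < n then (if (⟨(i : ℕ), h⟩ : Fin n) ∈ S then z i else 0) else z i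

/-- The iterated estimated vector degrees `V_t^S`. -/
def Vt {n m : ℕ} (n' : ℕ → ℕ) (h0 : n' 0 = n + m)
    (f : ∀ t, (Fin (n' t) → ZMod 2) → (Fin (n' (t + 1)) → ZMod 2))
    (J S : Finset (Fin n)) :
    (t : ℕ) → Fin (n' (t + 1)) → (↥(liftJ h0 J) → ZMod 2) → WithBot ℤ
  | 0 => fun i => vdeg (fun z => f 0 (mask0 h0 S z) i) (liftJ h0 J)
  | t + 1 => fun i => VDEG (fun y => f (t + 1) y i) (Vt n' h0 f J S t)

/-- The estimated vector degree `vdeg-hat^S` (here `r = s + 2`). -/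
def vdegHat {n m : ℕ} (n' : ℕ → ℕ) (h0 : n' 0 = n + m)
    (f : ∀ t, (Fin (n' t) → ZMod 2) → (Fin (n' (t + 1)) → ZMod 2))
    (J : Finset (Fin n)) (s : ℕ) (S : Finset (Fin n)) :
    (↥(liftJ h0 J) → ZMod 2) → WithBot ℤ :=
  VDEG (fun y => monom (fun _ => 1) (f (s + 1) y)) (Vt n' h0 f J S s)

/-- The estimated degree `deg-hat^S`. -/
noncomputable def degHat {n m : ℕ} (n' : ℕ → ℕ) (h0 : n' 0 = n + m)
    (f : ∀ t, (Fin (n' t) → ZMod 2) → (Fin (n' (t + 1)) → ZMod 2))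
    (J : Finset (Fin n)) (s : ℕ) (S : Finset (Fin n)) : WithBot ℤ :=
  Finset.univ.sup (fun w : ↥(liftJ h0 J) → ZMod 2 =>
    vdegHat n' h0 f J s S w + ((wt w : ℤ) : WithBot ℤ))

end Iterated


section Aux

variable {α : Type*}

lemma prod_ite_eq_ite_eq [Fintype α] [DecidableEq α] (v u : α → ZMod 2) :
    (∏ i, if v i = u i then (1:ZMod 2) else 0) = if v = u then 1 else 0 := by
  by_cases h : v = u
  · simp [h]
  · obtain ⟨i, hi⟩ := Function.ne_iff.mp h
    rw [if_neg h]
    exact Finset.prod_eq_zero (Finset.mem_univ i) (if_neg hi)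

lemma zmod2_ne_one : ∀ a : ZMod 2, a ≠ 1 ↔ a = 0 := by decide

lemma filter_le_eq_piFinset [Fintype α] [DecidableEq α] (u : α → ZMod 2) :
    Finset.univ.filter (fun v : α → ZMod 2 => ∀ i, v i = 1 → u i = 1)
      = Fintype.piFinset (fun i => if u i = 1 then (Finset.univ : Finset (ZMod 2)) else {0}) := by
  ext v
  simp only [Finset.mem_filter, Finset.mem_univ, true_and, Fintype.mem_piFinset]
  refine ⟨fun h i => ?_, fun h i hv => ?_⟩
  · by_cases hu : u i = 1
    · simp [hu]
    · simp only [hu, if_false, Finset.mem_singleton]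
      rw [← zmod2_ne_one]
      exact fun hv => hu (h i hv)
  · by_contra hu
    have := h i
    rw [if_neg hu, Finset.mem_singleton] at this
    rw [this] at hv
    exact absurd hv (by decide)

lemma sum_monom_subcube [Fintype α] [DecidableEq α] (u t : α → ZMod 2) :
    ∑ v ∈ Finset.univ.filter (fun v : α → ZMod 2 => ∀ i, v i = 1 → u i = 1),
      monom t v = if t = u then 1 else 0 := by
  rw [filter_le_eq_piFinset]
  unfold monom
  rw [← Finset.prod_univ_sum (fun i => if u i = 1 then (Finset.univ : Finset (ZMod 2)) else {0})
    (fun i d => if t i = 1 then d else 1)]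
  have h : ∀ b c : ZMod 2, (∑ d ∈ (if b = 1 then (Finset.univ : Finset (ZMod 2)) else {0}),
      if c = 1 then d else 1) = if c = b then 1 else 0 := by decide
  calc (∏ i, ∑ d ∈ (if u i = 1 then (Finset.univ : Finset (ZMod 2)) else {0}),
          if t i = 1 then d else 1)
      = ∏ i, if t i = u i then (1:ZMod 2) else 0 :=
        Finset.prod_congr rfl (fun i _ => h (u i) (t i))
    _ = if t = u then 1 else 0 := prod_ite_eq_ite_eq t u

/-- ANF of a polynomial with coefficients `a` recovers `a`. -/
lemma anf_sum_monom [Fintype α] [DecidableEq α] (a : (α → ZMod 2) → ZMod 2)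
    (u : α → ZMod 2) : anf (fun x => ∑ t, a t * monom t x) u = a u := by
  unfold anf
  rw [Finset.sum_comm]
  calc (∑ t, ∑ v ∈ Finset.univ.filter (fun v : α → ZMod 2 => ∀ i, v i = 1 → u i = 1),
          a t * monom t v)
      = ∑ t, a t * (if t = u then 1 else 0) := by
        refine Finset.sum_congr rfl (fun t _ => ?_)
        rw [← Finset.mul_sum, sum_monom_subcube]
    _ = a u := by simp

/-- Each function equals its ANF polynomial. -/
lemma sum_anf_monom [Fintype α] [DecidableEq α] (f : (α → ZMod 2) → ZMod 2)
    (x : α → ZMod 2) : ∑ u, anf f u * monom u x = f x := by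
  unfold anf
  have hfilt : ∀ v : α → ZMod 2,
      Finset.univ.filter (fun u : α → ZMod 2 => ∀ i, v i = 1 → u i = 1)
        = Fintype.piFinset (fun i => if v i = 1 then ({1} : Finset (ZMod 2)) else Finset.univ) := by
    intro v
    ext u
    simp only [Finset.mem_filter, Finset.mem_univ, true_and, Fintype.mem_piFinset]
    refine ⟨fun h i => ?_, fun h i hv => ?_⟩
    · by_cases hv : v i = 1
      · simp [hv, h i hv]
      · simp [hv]
    · have := h i
      rw [if_pos hv, Finset.mem_singleton] at this
      exact this
  have key : ∀ v : α → ZMod 2,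
      (∑ u, if (∀ i, v i = 1 → u i = 1) then monom u x else 0) = if v = x then 1 else 0 := by
    intro v
    rw [← Finset.sum_filter, hfilt v]
    unfold monom
    rw [← Finset.prod_univ_sum (fun i => if v i = 1 then ({1} : Finset (ZMod 2)) else Finset.univ)
      (fun i d => if d = 1 then x i else 1)]
    have h : ∀ b c : ZMod 2, (∑ d ∈ (if b = 1 then ({1} : Finset (ZMod 2)) else Finset.univ),
        if d = 1 then c else 1) = if b = c then 1 else 0 := by decide
    calc (∏ i, ∑ d ∈ (if v i = 1 then ({1} : Finset (ZMod 2)) else Finset.univ),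
            if d = 1 then x i else 1)
        = ∏ i, if v i = x i then (1:ZMod 2) else 0 :=
          Finset.prod_congr rfl (fun i _ => h (v i) (x i))
      _ = if v = x then 1 else 0 := prod_ite_eq_ite_eq v x
  calc ∑ u, (∑ v ∈ Finset.univ.filter (fun v : α → ZMod 2 => ∀ i, v i = 1 → u i = 1), f v)
          * monom u x
      = ∑ u, ∑ v, (if (∀ i, v i = 1 → u i = 1) then f v * monom u x else 0) := by
        refine Finset.sum_congr rfl (fun u _ => ?_)
        rw [Finset.sum_mul, Finset.sum_filter]
    _ = ∑ v, ∑ u, (if (∀ i, v i = 1 → u i = 1) then f v * monom u x else 0) := Finset.sum_comm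
    _ = ∑ v, f v * (if v = x then 1 else 0) := by
        refine Finset.sum_congr rfl (fun v _ => ?_)
        rw [← key v, Finset.mul_sum]
        refine Finset.sum_congr rfl (fun u _ => ?_)
        split <;> simp
    _ = f x := by simp

/-- Coordinatewise OR of two vectors. -/
def orv (v v' : α → ZMod 2) : α → ZMod 2 := fun i => if v i = 1 ∨ v' i = 1 then 1 else 0

lemma monom_mul_monom [Fintype α] [DecidableEq α] (v v' x : α → ZMod 2) :
    monom v x * monom v' x = monom (orv v v') x := by
  unfold monom orv
  rw [← Finset.prod_mul_distrib]
  refine Finset.prod_congr rfl (fun i _ => ?_)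
  have hxx : ∀ a : ZMod 2, a * a = a := by decide
  by_cases h1 : v i = 1 <;> by_cases h2 : v' i = 1 <;>
    simp [h1, h2, hxx, show (0:ZMod 2) ≠ 1 by decide]

lemma anf_mul [Fintype α] [DecidableEq α] (f g : (α → ZMod 2) → ZMod 2) (u : α → ZMod 2)
    (h : anf (fun x => f x * g x) u = 1) :
    ∃ v v' : α → ZMod 2, anf f v = 1 ∧ anf g v' = 1 ∧ u = orv v v' := by
  set a : (α → ZMod 2) → ZMod 2 := fun t =>
    ∑ p : (α → ZMod 2) × (α → ZMod 2),
      if orv p.1 p.2 = t then anf f p.1 * anf g p.2 else 0 with ha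
  have hfg : (fun x => f x * g x) = fun x => ∑ t, a t * monom t x := by
    funext x
    rw [← sum_anf_monom f x, ← sum_anf_monom g x, Finset.sum_mul_sum]
    calc ∑ v, ∑ v', (anf f v * monom v x) * (anf g v' * monom v' x)
        = ∑ v, ∑ v', (anf f v * anf g v') * monom (orv v v') x := by
          refine Finset.sum_congr rfl fun v _ => Finset.sum_congr rfl fun v' _ => ?_
          rw [← monom_mul_monom]; ring
      _ = ∑ p : (α → ZMod 2) × (α → ZMod 2),
            (anf f p.1 * anf g p.2) * monom (orv p.1 p.2) x := by
          exact (Fintype.sum_prod_type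
            (fun p : (α → ZMod 2) × (α → ZMod 2) =>
              anf f p.1 * anf g p.2 * monom (orv p.1 p.2) x)).symm
      _ = ∑ t, a t * monom t x := by
          rw [ha]
          simp_rw [Finset.sum_mul, ite_mul, zero_mul]
          rw [Finset.sum_comm]
          refine Finset.sum_congr rfl fun p _ => ?_
          rw [Finset.sum_ite_eq (Finset.univ) (orv p.1 p.2)]
          simp
  rw [hfg, anf_sum_monom] at h
  obtain ⟨p, -, hp⟩ := Finset.exists_ne_zero_of_sum_ne_zero (h ▸ one_ne_zero)
  have hor : orv p.1 p.2 = u := by by_contra hc; rw [if_neg hc] at hp; exact hp rfl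
  rw [if_pos hor] at hp
  have h2 : ∀ a b : ZMod 2, a * b ≠ 0 → a = 1 ∧ b = 1 := by decide
  exact ⟨p.1, p.2, (h2 _ _ hp).1, (h2 _ _ hp).2, hor.symm⟩

/-- Coordinatewise OR over a finite family. -/
def orS {ι : Type*} (s : Finset ι) (v : ι → α → ZMod 2) : α → ZMod 2 :=
  fun j => if ∃ i ∈ s, v i j = 1 then 1 else 0

lemma anf_one [Fintype α] [DecidableEq α] (u : α → ZMod 2)
    (h : anf (fun _ : α → ZMod 2 => (1 : ZMod 2)) u = 1) : u = 0 := by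
  have h1 : (fun _ : α → ZMod 2 => (1:ZMod 2))
      = fun x => ∑ t, (if t = 0 then (1:ZMod 2) else 0) * monom t x := by
    funext x
    simp only [ite_mul, one_mul, zero_mul, Finset.sum_ite_eq', Finset.mem_univ, if_true]
    simp [monom, show ((0:ZMod 2) = 1) = False by simp]
  rw [h1, anf_sum_monom] at h
  by_contra hc
  rw [if_neg hc] at h
  exact absurd h (by decide)

lemma anf_prod {ι : Type*} [Fintype α] [DecidableEq α] [DecidableEq ι] (s : Finset ι)
    (f : ι → (α → ZMod 2) → ZMod 2) (u : α → ZMod 2)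
    (h : anf (fun x => ∏ i ∈ s, f i x) u = 1) :
    ∃ v : ι → α → ZMod 2, (∀ i ∈ s, anf (f i) (v i) = 1) ∧ (∀ i ∉ s, v i = 0)
      ∧ u = orS s v := by
  induction s using Finset.induction_on generalizing u with
  | empty =>
    simp only [Finset.prod_empty] at h
    refine ⟨fun _ => 0, by simp, fun _ _ => rfl, ?_⟩
    rw [anf_one u h]
    funext j
    simp [orS]
  | @insert a s' ha ih =>
    simp only [Finset.prod_insert ha] at h
    obtain ⟨v₀, u', hv₀, hu', hor⟩ := anf_mul _ _ _ h
    obtain ⟨v, hv1, hv2, hv3⟩ := ih u' hu'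
    refine ⟨Function.update v a v₀, ?_, ?_, ?_⟩
    · intro i hi
      rcases Finset.mem_insert.mp hi with rfl | hi2
      · rwa [Function.update_self]
      · rw [Function.update_of_ne (by rintro rfl; exact ha hi2)]
        exact hv1 i hi2
    · intro i hi
      rw [Finset.mem_insert, not_or] at hi
      rw [Function.update_of_ne hi.1]
      exact hv2 i hi.2
    · rw [hor, hv3]
      funext j
      simp only [orv, orS]
      have : (if ∃ i ∈ s', v i j = 1 then (1:ZMod 2) else 0) = 1 ↔ ∃ i ∈ s', v i j = 1 := by
        split <;> simp_all
      refine if_congr ?_ rfl rfl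
      rw [this]
      constructor
      · rintro (h0 | ⟨i, hi, hij⟩)
        · exact ⟨a, Finset.mem_insert_self a s', by rwa [Function.update_self]⟩
        · exact ⟨i, Finset.mem_insert_of_mem hi,
            by rwa [Function.update_of_ne (by rintro rfl; exact ha hi)]⟩
      · rintro ⟨i, hi, hij⟩
        rcases Finset.mem_insert.mp hi with rfl | hi2
        · rw [Function.update_self] at hij; exact Or.inl hij
        · rw [Function.update_of_ne (by rintro rfl; exact ha hi2)] at hij
          exact Or.inr ⟨i, hi2, hij⟩

lemma anf_coeffFun [Fintype α] [DecidableEq α] (f : (α → ZMod 2) → ZMod 2)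
    (I : Finset α) (w : ↥I → ZMod 2) (t : ↥Iᶜ → ZMod 2) :
    anf (coeffFun f I w) t = anf f (combine I w t) :=
  anf_sum_monom (fun t => anf f (combine I w t)) t

end Aux

/-- Bound on the vector degree of a product `g^u = ∏_{i : u_i = 1} g_i`. -/
theorem vdeg_prod_le {m n : ℕ} (g : Fin n → (Fin m → ZMod 2) → ZMod 2)
    (I : Finset (Fin m)) (V : Fin n → (↥I → ZMod 2) → WithBot ℤ)
    (hV : ∀ i w, vdeg (g i) I w ≤ V i w)
    (u : Fin n → ZMod 2) (w : ↥I → ZMod 2) :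
    vdeg (fun x => ∏ i ∈ Finset.univ.filter (fun i => u i = 1), g i x) I w ≤
      (Finset.univ.filter (fun W : Fin n → (↥I → ZMod 2) =>
          (∀ i, u i = 0 → W i = 0) ∧ w = orFam u W)).sup
        (fun W => ∑ i ∈ Finset.univ.filter (fun i => u i = 1), V i (W i)) := by
  classical
  set U := Finset.univ.filter (fun i => u i = 1) with hU
  show deg (coeffFun (fun x => ∏ i ∈ U, g i x) I w) ≤ _
  unfold deg
  refine Finset.sup_le ?_
  intro t ht
  rw [Finset.mem_filter] at ht
  have hanf : anf (fun x => ∏ i ∈ U, g i x) (combine I w t) = 1 := by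
    rw [← anf_coeffFun]; exact ht.2
  obtain ⟨v, hv1, hv2, hv3⟩ := anf_prod U g (combine I w t) hanf
  set W : Fin n → (↥I → ZMod 2) := fun i j => v i ↑j with hWdef
  set T : Fin n → (↥Iᶜ → ZMod 2) := fun i j => v i ↑j with hTdef
  have hcomb : ∀ i, combine I (W i) (T i) = v i := by
    intro i; funext k; unfold combine; split <;> rfl
  have hWmem : W ∈ Finset.univ.filter (fun W : Fin n → (↥I → ZMod 2) =>
      (∀ i, u i = 0 → W i = 0) ∧ w = orFam u W) := by
    rw [Finset.mem_filter]
    refine ⟨Finset.mem_univ _, fun i hi => ?_, ?_⟩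
    · have hnotU : i ∉ U := by
        rw [hU, Finset.mem_filter]
        rintro ⟨-, h1⟩
        rw [hi] at h1
        exact absurd h1 (by decide)
      have hvz := hv2 i hnotU
      funext j
      show v i ↑j = 0
      rw [hvz]
      rfl
    · funext j
      have h1 : combine I w t ↑j = w j := by
        unfold combine
        rw [dif_pos j.2]
      have h2 := congrFun hv3 (↑j : Fin m)
      rw [h1] at h2
      rw [h2]
      unfold orS orFam
      congr 1
      apply propext
      constructor
      · rintro ⟨i, hi, hij⟩
        exact ⟨i, (Finset.mem_filter.mp hi).2, hij⟩
      · rintro ⟨i, hi, hij⟩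
        exact ⟨i, Finset.mem_filter.mpr ⟨Finset.mem_univ _, hi⟩, hij⟩
  have hb : ∀ i ∈ U, ((wt (T i) : ℤ) : WithBot ℤ) ≤ V i (W i) := by
    intro i hi
    have h1 : anf (coeffFun (g i) I (W i)) (T i) = 1 := by
      rw [anf_coeffFun, hcomb]
      exact hv1 i hi
    have h2 : ((wt (T i) : ℤ) : WithBot ℤ) ≤ vdeg (g i) I (W i) := by
      show _ ≤ deg (coeffFun (g i) I (W i))
      unfold deg
      exact Finset.le_sup (f := fun u => ((wt u : ℤ) : WithBot ℤ))
        (Finset.mem_filter.mpr ⟨Finset.mem_univ _, h1⟩)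
    exact le_trans h2 (hV i (W i))
  have hwt : wt t ≤ ∑ i ∈ U, wt (T i) := by
    have hsub : Finset.univ.filter (fun j : ↥Iᶜ => t j = 1) ⊆
        U.biUnion (fun i => Finset.univ.filter (fun j : ↥Iᶜ => T i j = 1)) := by
      intro j hj
      rw [Finset.mem_filter] at hj
      have h1 : combine I w t ↑j = t j := by
        unfold combine
        rw [dif_neg (Finset.mem_compl.mp j.2)]
      have h2 := congrFun hv3 (↑j : Fin m)
      rw [h1, hj.2] at h2
      have hex : ∃ i ∈ U, v i (↑j : Fin m) = 1 := by
        by_contra hc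
        unfold orS at h2
        rw [if_neg hc] at h2
        exact absurd h2.symm (by decide)
      obtain ⟨i, hi, hij⟩ := hex
      exact Finset.mem_biUnion.mpr ⟨i, hi,
        Finset.mem_filter.mpr ⟨Finset.mem_univ _, hij⟩⟩
    calc wt t ≤ _ := Finset.card_le_card hsub
      _ ≤ ∑ i ∈ U, wt (T i) := Finset.card_biUnion_le
  have hcast : ((wt t : ℤ) : WithBot ℤ) ≤ ∑ i ∈ U, V i (W i) := by
    refine le_trans ?_ (Finset.sum_le_sum hb)
    calc ((wt t : ℤ) : WithBot ℤ)
        ≤ (((∑ i ∈ U, wt (T i) : ℕ) : ℤ) : WithBot ℤ) := by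
          rw [WithBot.coe_le_coe]
          exact_mod_cast hwt
      _ = ∑ i ∈ U, ((wt (T i) : ℤ) : WithBot ℤ) := by
          induction U using Finset.cons_induction with
          | empty => simp
          | cons a s ha ih =>
            rw [Finset.sum_cons, Finset.sum_cons, ← ih]
            push_cast
            ring
  exact le_trans hcast
    (Finset.le_sup (f := fun W : Fin n → (↥I → ZMod 2) => ∑ i ∈ U, V i (W i)) hWmem)
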